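/- Let r = 2^t for a positive integer t, let x be a positive integer, and let n be a multiple of r^x. For every set X = {π_1,...,π_x} of permutations of [n], there exist pairwise disjoint sets A_1,...,A_r ⊆ [n], each of size n/r^x, that are consistent with X: for every i ∈ [x] and every pair j ≠ j', either all elements of A_j precede all elements of A_{j'} in π_i, or all elements of A_{j'} precede all elements of A_j in π_i. -/

import Mathlib

/-- `A ⇒ B` in `π`: every element of `A` appears before every element of `B`
in the permutation `π`. -/
def Before {n : ℕ} (π : Equiv.Perm (Fin n)) (A B : Finset (Fin n)) : Prop :=
  ∀ a ∈ A, ∀ b ∈ B, π a < π b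

section aux
variable {α : Type*} [LinearOrder α] [DecidableEq α]

lemma init_seg (s : ℕ) (T : Finset α) (h : s ≤ T.card) :
    ∃ B : Finset α, B ⊆ T ∧ B.card = s ∧ ∀ a ∈ B, ∀ b ∈ T \ B, a < b := by
  induction s with
  | zero => exact ⟨∅, by simp, by simp, by simp⟩
  | succ s ih =>
    obtain ⟨B, hBT, hBc, hord⟩ := ih (le_trans (Nat.le_succ s) h)
    have hne : (T \ B).Nonempty := by
      rw [← Finset.card_pos, Finset.card_sdiff_of_subset hBT]
      omega
    set b₀ := (T \ B).min' hne with hb₀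
    have hb₀m : b₀ ∈ T \ B := (T \ B).min'_mem hne
    have hb₀T : b₀ ∈ T := (Finset.mem_sdiff.mp hb₀m).1
    have hb₀B : b₀ ∉ B := (Finset.mem_sdiff.mp hb₀m).2
    refine ⟨insert b₀ B, Finset.insert_subset hb₀T hBT, ?_, ?_⟩
    · rw [Finset.card_insert_of_notMem hb₀B, hBc]
    · intro a ha b hb
      rw [Finset.mem_sdiff, Finset.mem_insert] at hb
      push_neg at hb
      obtain ⟨hbT, hbb₀, hbB⟩ := hb
      rcases Finset.mem_insert.mp ha with rfl | haB
      · exact lt_of_le_of_ne ((T \ B).min'_le b (Finset.mem_sdiff.mpr ⟨hbT, hbB⟩)) (Ne.symm hbb₀)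
      · exact hord a haB b (Finset.mem_sdiff.mpr ⟨hbT, hbB⟩)

lemma split_blocks : ∀ (r s : ℕ) (T : Finset α), r * s ≤ T.card →
    ∃ B : Fin r → Finset α, (∀ j, B j ⊆ T) ∧
      (∀ j j', j ≠ j' → Disjoint (B j) (B j')) ∧
      (∀ j, (B j).card = s) ∧
      (∀ j j', j < j' → ∀ a ∈ B j, ∀ b ∈ B j', a < b) := by
  intro r
  induction r with
  | zero =>
    intro s T _
    exact ⟨fun j => j.elim0, fun j => j.elim0, fun j => j.elim0,
      fun j => j.elim0, fun j => j.elim0⟩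
  | succ r ih =>
    intro s T h
    have hrs : (r + 1) * s = r * s + s := by ring
    obtain ⟨C, hCT, hCc, hCord⟩ := init_seg s T (by omega)
    have hT' : r * s ≤ (T \ C).card := by
      rw [Finset.card_sdiff_of_subset hCT, hCc]; omega
    obtain ⟨B', hB'T, hB'd, hB'c, hB'ord⟩ := ih s (T \ C) hT'
    refine ⟨Fin.cons C B', ?_, ?_, ?_, ?_⟩
    · intro j
      induction j using Fin.cases with
      | zero => simpa using hCT
      | succ i => simpa using (hB'T i).trans (Finset.sdiff_subset)
    · intro j j' hne
      induction j using Fin.cases with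
      | zero =>
        induction j' using Fin.cases with
        | zero => exact absurd rfl hne
        | succ i' =>
          simp only [Fin.cons_zero, Fin.cons_succ]
          rw [Finset.disjoint_left]
          intro a haC haB
          exact (Finset.mem_sdiff.mp (hB'T i' haB)).2 haC
      | succ i =>
        induction j' using Fin.cases with
        | zero =>
          simp only [Fin.cons_zero, Fin.cons_succ]
          rw [Finset.disjoint_right]
          intro a haC haB
          exact (Finset.mem_sdiff.mp (hB'T i haB)).2 haC
        | succ i' =>
          simp only [Fin.cons_succ]
          exact hB'd i i' (fun h => hne (by rw [h]))
    · intro j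
      induction j using Fin.cases with
      | zero => simpa using hCc
      | succ i => simpa using hB'c i
    · intro j j' hlt
      induction j using Fin.cases with
      | zero =>
        induction j' using Fin.cases with
        | zero => exact absurd hlt (lt_irrefl _)
        | succ i' =>
          simp only [Fin.cons_zero, Fin.cons_succ]
          intro a ha b hb
          exact hCord a ha b (hB'T i' hb)
      | succ i =>
        induction j' using Fin.cases with
        | zero => exact (Fin.not_lt_zero _ hlt).elim
        | succ i' =>
          simp only [Fin.cons_succ]
          exact hB'ord i i' (Fin.succ_lt_succ_iff.mp hlt)


lemma greedy (s : ℕ) : ∀ (k : ℕ) (A : Fin k → Finset α),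
    (∀ j j', j ≠ j' → Disjoint (A j) (A j')) →
    (∀ j, k * s ≤ (A j).card) →
    ∃ (f : Fin k → Fin k) (B : Fin k → Finset α),
      Function.Injective f ∧ (∀ j, B j ⊆ A (f j)) ∧
      (∀ j, (B j).card = s) ∧
      (∀ j j', j < j' → ∀ a ∈ B j, ∀ b ∈ B j', a < b) := by
  intro k
  induction k with
  | zero =>
    intro A _ _
    exact ⟨id, fun j => j.elim0, Function.injective_id, fun j => j.elim0,
      fun j => j.elim0, fun j => j.elim0⟩
  | succ k ih =>
    intro A hd hc
    rcases Nat.eq_zero_or_pos s with rfl | hs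
    · exact ⟨id, fun _ => ∅, Function.injective_id, fun j => Finset.empty_subset _,
        fun j => Finset.card_empty, fun j j' _ a ha => absurd ha (Finset.notMem_empty a)⟩
    have hks : (k + 1) * s = k * s + s := by ring
    -- initial segments of each set
    have hsle : ∀ j : Fin (k+1), s ≤ (A j).card := fun j => by have := hc j; omega
    choose C hCsub hCcard hCord using fun j => init_seg s (A j) (hsle j)
    have hCne : ∀ j, (C j).Nonempty := fun j => by
      rw [← Finset.card_pos, hCcard]; omega
    set q : Fin (k+1) → α := fun j => (C j).max' (hCne j) with hq
    obtain ⟨j₀, -, hj₀min⟩ := Finset.exists_min_image Finset.univ q Finset.univ_nonempty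
    have hqmem : ∀ j, q j ∈ C j := fun j => (C j).max'_mem (hCne j)
    -- the reduced sets
    set A' : Fin k → Finset α := fun i =>
      (A (j₀.succAbove i)).filter (fun a => q j₀ < a) with hA'
    have hd' : ∀ i i', i ≠ i' → Disjoint (A' i) (A' i') := by
      intro i i' hne
      exact Finset.disjoint_filter_filter
        (hd _ _ (fun h => hne (Fin.succAbove_right_injective h)))
    have hremoved : ∀ j, j ≠ j₀ →
        ((A j).filter (fun a => ¬ q j₀ < a)) ⊆ (C j).erase (q j) := by
      intro j hne a ha
      rw [Finset.mem_filter] at ha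
      obtain ⟨haA, haq⟩ := ha
      push_neg at haq
      have haC : a ∈ C j := by
        by_contra haC
        have := hCord j (q j) (hqmem j) a (Finset.mem_sdiff.mpr ⟨haA, haC⟩)
        exact absurd (lt_of_lt_of_le this (haq.trans (hj₀min j (Finset.mem_univ j))))
          (lt_irrefl _)
      refine Finset.mem_erase.mpr ⟨?_, haC⟩
      intro hEq
      have h1 : q j = q j₀ := le_antisymm (hEq ▸ haq) (hj₀min j (Finset.mem_univ j))
      have : q j ∈ A j₀ := h1 ▸ hCsub j₀ (hqmem j₀)
      exact (Finset.disjoint_left.mp (hd j j₀ hne) (hCsub j (hqmem j))) this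
    have hc' : ∀ i, k * s ≤ (A' i).card := by
      intro i
      set j := j₀.succAbove i with hj
      have hjne : j ≠ j₀ := Fin.succAbove_ne j₀ i
      have h1 := Finset.card_filter_add_card_filter_not
        (s := A j) (p := fun a => q j₀ < a)
      have h2 : ((A j).filter (fun a => ¬ q j₀ < a)).card ≤ s - 1 := by
        calc ((A j).filter (fun a => ¬ q j₀ < a)).card
            ≤ ((C j).erase (q j)).card := Finset.card_le_card (hremoved j hjne)
          _ = s - 1 := by rw [Finset.card_erase_of_mem (hqmem j), hCcard]
      have h3 := hc j
      have h4 : (A' i).card = ((A j).filter (fun a => q j₀ < a)).card := rfl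
      omega
    obtain ⟨f', B', hf'inj, hB'sub, hB'card, hB'ord⟩ := ih A' hd' hc'
    refine ⟨Fin.cons j₀ (fun i => j₀.succAbove (f' i)), Fin.cons (C j₀) B', ?_, ?_, ?_, ?_⟩
    · intro a b hab
      induction a using Fin.cases with
      | zero =>
        induction b using Fin.cases with
        | zero => rfl
        | succ i =>
          rw [Fin.cons_zero, Fin.cons_succ] at hab
          exact absurd hab.symm (Fin.succAbove_ne j₀ (f' i))
      | succ i =>
        induction b using Fin.cases with
        | zero =>
          rw [Fin.cons_zero, Fin.cons_succ] at hab
          exact absurd hab (Fin.succAbove_ne j₀ (f' i))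
        | succ i' =>
          rw [Fin.cons_succ, Fin.cons_succ] at hab
          exact congrArg Fin.succ (hf'inj (Fin.succAbove_right_injective hab))
    · intro j
      induction j using Fin.cases with
      | zero => simpa using hCsub j₀
      | succ i =>
        simp only [Fin.cons_succ]
        exact (hB'sub i).trans (Finset.filter_subset _ _)
    · intro j
      induction j using Fin.cases with
      | zero => simpa using hCcard j₀
      | succ i => simpa using hB'card i
    · intro j j' hlt
      induction j using Fin.cases with
      | zero =>
        induction j' using Fin.cases with
        | zero => exact absurd hlt (lt_irrefl _)
        | succ i' =>
          simp only [Fin.cons_zero, Fin.cons_succ]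
          intro a ha b hb
          have hbq : q j₀ < b := (Finset.mem_filter.mp (hB'sub i' hb)).2
          exact lt_of_le_of_lt ((C j₀).le_max' a ha) hbq
      | succ i =>
        induction j' using Fin.cases with
        | zero => exact (Fin.not_lt_zero _ hlt).elim
        | succ i' =>
          simp only [Fin.cons_succ]
          exact hB'ord i i' (Fin.succ_lt_succ_iff.mp hlt)


end aux

lemma beforeMono {n : ℕ} {π : Equiv.Perm (Fin n)} {A B A' B' : Finset (Fin n)}
    (h : Before π A B) (hA : A' ⊆ A) (hB : B' ⊆ B) : Before π A' B' :=
  fun a ha b hb => h a (hA ha) b (hB hb)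

lemma greedyPerm {n : ℕ} (π : Equiv.Perm (Fin n)) (k s : ℕ) (A : Fin k → Finset (Fin n))
    (hd : ∀ j j', j ≠ j' → Disjoint (A j) (A j'))
    (hc : ∀ j, k * s ≤ (A j).card) :
    ∃ (f : Fin k → Fin k) (B : Fin k → Finset (Fin n)),
      Function.Injective f ∧ (∀ j, B j ⊆ A (f j)) ∧
      (∀ j, (B j).card = s) ∧
      (∀ j j', j < j' → Before π (B j) (B j')) := by
  set Ab : Fin k → Finset (Fin n) := fun j => (A j).map π.toEmbedding with hAb
  have hmemA : ∀ j (c : Fin n), c ∈ Ab j ↔ π.symm c ∈ A j := by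
    intro j c; exact Finset.mem_map_equiv
  have hdb : ∀ j j', j ≠ j' → Disjoint (Ab j) (Ab j') := by
    intro j j' hne
    rw [Finset.disjoint_left]
    intro c hc1 hc2
    exact Finset.disjoint_left.mp (hd j j' hne) ((hmemA j c).mp hc1) ((hmemA j' c).mp hc2)
  have hcb : ∀ j, k * s ≤ (Ab j).card := by
    intro j; rw [hAb]; simpa [Finset.card_map] using hc j
  obtain ⟨f, Bb, hfinj, hBsub, hBcard, hBord⟩ := greedy s k Ab hdb hcb
  refine ⟨f, fun j => (Bb j).map π.symm.toEmbedding, hfinj, ?_, ?_, ?_⟩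
  · intro j a ha
    have : π.symm.symm a ∈ Bb j := Finset.mem_map_equiv.mp ha
    rw [Equiv.symm_symm] at this
    have := (hmemA (f j) (π a)).mp (hBsub j this)
    simpa using this
  · intro j; simp [Finset.card_map, hBcard j]
  · intro j j' hlt a ha b hb
    have ha' : π a ∈ Bb j := by
      have : π.symm.symm a ∈ Bb j := Finset.mem_map_equiv.mp ha
      rwa [Equiv.symm_symm] at this
    have hb' : π b ∈ Bb j' := by
      have : π.symm.symm b ∈ Bb j' := Finset.mem_map_equiv.mp hb
      rwa [Equiv.symm_symm] at this
    exact hBord j j' hlt (π a) ha' (π b) hb'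

lemma consistent {n : ℕ} (r : ℕ) (hr : 0 < r) :
    ∀ (x m : ℕ) (X : Fin x → Equiv.Perm (Fin n)) (A : Fin r → Finset (Fin n)),
    (∀ j j', j ≠ j' → Disjoint (A j) (A j')) → (∀ j, (A j).card = m) → r ^ x ∣ m →
    ∃ (f : Fin r → Fin r) (B : Fin r → Finset (Fin n)),
      Function.Injective f ∧ (∀ j, B j ⊆ A (f j)) ∧ (∀ j, (B j).card = m / r ^ x) ∧
      (∀ (i : Fin x) (j j' : Fin r), j ≠ j' →
        Before (X i) (B j) (B j') ∨ Before (X i) (B j') (B j)) := by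
  intro x
  induction x with
  | zero =>
    intro m X A hd hc _
    exact ⟨id, A, Function.injective_id, fun j => subset_rfl,
      fun j => by simpa using hc j, fun i => i.elim0⟩
  | succ x ih =>
    intro m X A hd hc hdvd
    have hrm : r ∣ m := dvd_trans (dvd_pow_self r (Nat.succ_ne_zero x)) hdvd
    have h1 : r * (m / r) = m := Nat.mul_div_cancel' hrm
    obtain ⟨f₁, C, hf₁, hCsub, hCcard, hCord⟩ :=
      greedyPerm (X 0) r (m / r) A hd (fun j => by rw [hc j, h1])
    have hdC : ∀ j j', j ≠ j' → Disjoint (C j) (C j') := by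
      intro j j' hne
      exact Finset.disjoint_of_subset_left (hCsub j)
        (Finset.disjoint_of_subset_right (hCsub j') (hd _ _ (fun h => hne (hf₁ h))))
    have hdvd' : r ^ x ∣ m / r := by
      obtain ⟨d, rfl⟩ := hdvd
      rw [pow_succ', mul_assoc, Nat.mul_div_cancel_left _ hr]
      exact Dvd.intro d rfl
    obtain ⟨g, B, hg, hBsub, hBcard, hBcons⟩ :=
      ih (m / r) (fun i => X i.succ) C hdC hCcard hdvd'
    refine ⟨f₁ ∘ g, B, hf₁.comp hg, fun j => (hBsub j).trans (hCsub (g j)), ?_, ?_⟩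
    · intro j
      rw [hBcard j, Nat.div_div_eq_div_mul, ← pow_succ']
    · intro i j j' hne
      induction i using Fin.cases with
      | zero =>
        rcases lt_or_gt_of_ne (fun h => hne (hg h)) with h | h
        · exact Or.inl (beforeMono (hCord _ _ h) (hBsub j) (hBsub j'))
        · exact Or.inr (beforeMono (hCord _ _ h) (hBsub j') (hBsub j))
      | succ i' => exact hBcons i' j j' hne

theorem stmt14 (t x n : ℕ) (ht : 1 ≤ t) (hx : 1 ≤ x)
    (hn : (2 ^ t) ^ x ∣ n) (X : Fin x → Equiv.Perm (Fin n)) :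
    ∃ A : Fin (2 ^ t) → Finset (Fin n),
      (∀ j j', j ≠ j' → Disjoint (A j) (A j')) ∧
      (∀ j, (A j).card = n / (2 ^ t) ^ x) ∧
      (∀ (i : Fin x) (j j' : Fin (2 ^ t)), j ≠ j' →
        Before (X i) (A j) (A j') ∨ Before (X i) (A j') (A j)) := by
  obtain ⟨x', rfl⟩ : ∃ x', x = x' + 1 := ⟨x - 1, by omega⟩
  set r : ℕ := 2 ^ t with hrdef
  have hr : 0 < r := Nat.pow_pos (n := t) (by norm_num)
  have hrn : r ∣ n := dvd_trans (dvd_pow_self r (Nat.succ_ne_zero x')) hn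
  have h1 : r * (n / r) = n := Nat.mul_div_cancel' hrn
  -- base blocks ordered in X 0
  obtain ⟨Pb, hPsub, hPd, hPcard, hPord⟩ :=
    split_blocks r (n / r) (Finset.univ : Finset (Fin n))
      (by rw [Finset.card_univ, Fintype.card_fin, h1])
  set P : Fin r → Finset (Fin n) := fun j => (Pb j).map (X 0).symm.toEmbedding with hP
  have hmemP : ∀ j (a : Fin n), a ∈ P j ↔ X 0 a ∈ Pb j := by
    intro j a
    rw [hP]
    constructor
    · intro h
      have : (X 0).symm.symm a ∈ Pb j := Finset.mem_map_equiv.mp h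
      rwa [Equiv.symm_symm] at this
    · intro h
      apply Finset.mem_map_equiv.mpr
      rwa [Equiv.symm_symm]
  have hPd' : ∀ j j', j ≠ j' → Disjoint (P j) (P j') := by
    intro j j' hne
    rw [Finset.disjoint_left]
    intro a h1' h2'
    exact Finset.disjoint_left.mp (hPd j j' hne) ((hmemP j a).mp h1') ((hmemP j' a).mp h2')
  have hPcard' : ∀ j, (P j).card = n / r := by
    intro j; rw [hP]; simp [Finset.card_map, hPcard j]
  have hPord' : ∀ j j', j < j' → Before (X 0) (P j) (P j') := by
    intro j j' hlt a ha b hb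
    exact hPord j j' hlt (X 0 a) ((hmemP j a).mp ha) (X 0 b) ((hmemP j' b).mp hb)
  have hdvd' : r ^ x' ∣ n / r := by
    obtain ⟨d, rfl⟩ := hn
    rw [pow_succ', mul_assoc, Nat.mul_div_cancel_left _ hr]
    exact Dvd.intro d rfl
  obtain ⟨f, B, hf, hBsub, hBcard, hBcons⟩ :=
    consistent r hr x' (n / r) (fun i => X i.succ) P hPd' hPcard' hdvd'
  refine ⟨B, ?_, ?_, ?_⟩
  · intro j j' hne
    exact Finset.disjoint_of_subset_left (hBsub j)
      (Finset.disjoint_of_subset_right (hBsub j') (hPd' _ _ (fun h => hne (hf h))))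
  · intro j
    rw [hBcard j, Nat.div_div_eq_div_mul, ← pow_succ']
  · intro i j j' hne
    induction i using Fin.cases with
    | zero =>
      rcases lt_or_gt_of_ne (fun h => hne (hf h)) with h | h
      · exact Or.inl (beforeMono (hPord' _ _ h) (hBsub j) (hBsub j'))
      · exact Or.inr (beforeMono (hPord' _ _ h) (hBsub j') (hBsub j))
    | succ i' => exact hBcons i' j j' hne
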